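/- If five 2×2 matrices S₋₁, S₀, S₁, S₂, S₃, with S₂ₖ₋₁ = [[1,0],[s₂ₖ₋₁,1]] lower triangular and S₂ₖ = [[1,s₂ₖ],[0,1]] upper triangular, satisfy the cyclic condition S₋₁S₀S₁S₂S₃ = iσ₁ (where σ₁ = [[0,1],[1,0]]), then the Stokes multipliers, extended 5-periodically by s_{k+5} = s_k, satisfy s_k = i(1 + s_{k+2}s_{k+3}) for all integers k. -/

import Mathlib

open Matrix Complex

/-- The cyclic condition `S₋₁S₀S₁S₂S₃ = iσ₁` for the alternating unipotent Stokes
matrices implies `s_k = i(1 + s_{k+2}s_{k+3})` for all `k`, where `s` is extended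
`5`-periodically. -/
theorem RTHE_stokes_relations (s : ℤ → ℂ)
    (hper : ∀ k : ℤ, s (k + 5) = s k)
    (hcyc : !![(1:ℂ), 0; s (-1), 1] * !![(1:ℂ), s 0; 0, 1] * !![(1:ℂ), 0; s 1, 1]
        * !![(1:ℂ), s 2; 0, 1] * !![(1:ℂ), 0; s 3, 1]
        = Complex.I • !![(0:ℂ), 1; 1, 0]) :
    ∀ k : ℤ, s k = Complex.I * (1 + s (k + 2) * s (k + 3)) := by
  have h := Matrix.ext_iff.mpr hcyc
  have e00 := h 0 0
  have e01 := h 0 1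
  have e10 := h 1 0
  have e11 := h 1 1
  simp [Matrix.mul_apply, Fin.sum_univ_two] at e00 e01 e10 e11
  set a := s (-1) with ha_def
  set b := s 0 with hb_def
  set c := s 1 with hc_def
  set d := s 2 with hd_def
  set e := s 3 with he_def
  -- basic scalar consequences
  have h1 : a + c + a * b * c = Complex.I := by
    linear_combination e10 - e * e11
  have hd : d = Complex.I * (1 + a * b) := by
    linear_combination (-Complex.I) * e11 + Complex.I * d * h1 + d * Complex.I_sq
  have he : e = Complex.I * (1 + b * c) := by
    linear_combination (-Complex.I) * e00 + Complex.I * e * e01 + e * Complex.I_sq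
  have hb : b = Complex.I * (1 + d * e) := by
    linear_combination e01 - Complex.I * d * he - (d + d * b * c) * Complex.I_sq
  have ha : a = Complex.I * (1 + c * d) := by
    linear_combination h1 - Complex.I * c * hd - (c + a * b * c) * Complex.I_sq
  have hc : c = Complex.I * (1 + e * a) := by
    linear_combination Complex.I * (-e) * ha + he + Complex.I * c * hb
      + (c * (1 + d * e) - e - e * c * d) * Complex.I_sq
  -- periodicity in both directions
  have hper' : ∀ m k : ℤ, s (k + 5 * m) = s k := by
    intro m
    induction m using Int.induction_on with
    | zero => simp
    | succ n ih =>
        intro k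
        rw [show k + 5 * ((n : ℤ) + 1) = (k + 5 * n) + 5 by ring, hper, ih]
    | pred n ih =>
        intro k
        have h5 := hper (k + 5 * (-(n : ℤ) - 1))
        rw [show k + 5 * (-(n : ℤ) - 1) + 5 = k + 5 * (-(n : ℤ)) by ring] at h5
        rw [← h5, ih]
  have h4 : s 4 = a := by
    have := hper (-1); norm_num at this; rw [this]
  have h5 : s 5 = b := by
    have := hper 0; norm_num at this; rw [this]
  have h6 : s 6 = c := by
    have := hper 1; norm_num at this; rw [this]
  have h7 : s 7 = d := by
    have := hper 2; norm_num at this; rw [this]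
  intro k
  have hk0 : (0:ℤ) ≤ k % 5 := Int.emod_nonneg k (by norm_num)
  have hk5 : k % 5 < 5 := Int.emod_lt_of_pos k (by norm_num)
  have hsk : s k = s (k % 5) := by
    conv_lhs => rw [show k = k % 5 + 5 * (k / 5) by omega]
    exact hper' (k / 5) (k % 5)
  have hsk2 : s (k + 2) = s (k % 5 + 2) := by
    conv_lhs => rw [show k + 2 = (k % 5 + 2) + 5 * (k / 5) by omega]
    exact hper' (k / 5) (k % 5 + 2)
  have hsk3 : s (k + 3) = s (k % 5 + 3) := by
    conv_lhs => rw [show k + 3 = (k % 5 + 3) + 5 * (k / 5) by omega]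
    exact hper' (k / 5) (k % 5 + 3)
  rw [hsk, hsk2, hsk3]
  set r := k % 5 with hr
  interval_cases r <;> norm_num
  · exact hb
  · rw [h4]; exact hc
  · rw [h4, h5]; exact hd
  · rw [h5, h6]; exact he
  · rw [h4, h6, h7]; exact ha
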